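/- The compression capacity of the model (10;C1,C2;f) equals C2. That is, the supremum, over all positive integers k and all admissible k-shot codes (φ1, φ2), of the rate k / max(⌈log|Im φ1| / C1⌉, ⌈log|Im φ2| / C2⌉) equals C2. -/
import Mathlib


/-!
Statement 3: The compression capacity of the model (10;C1,C2;f), where encoder 1 observes only x,
encoder 2 observes both sources, and the target function is the binary arithmetic sum
f(x,y) = x + y, equals C2. Encoders are maps with finite image; WLOG they take values in ℕ.
-/

/-- The componentwise integer sum of two binary vectors. -/
def vsum {k : ℕ} (x y : Fin k → Fin 2) : Fin k → ℕ := fun i => (x i : ℕ) + (y i : ℕ)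

/-- The cardinality of the image of an encoding map defined on `A^k`. -/
def imCard1 {k : ℕ} (φ : (Fin k → Fin 2) → ℕ) : ℕ := (Finset.univ.image φ).card

/-- The cardinality of the image of an encoding map defined on `A^k × A^k`. -/
def imCard2 {k : ℕ} (φ : (Fin k → Fin 2) × (Fin k → Fin 2) → ℕ) : ℕ :=
  (Finset.univ.image φ).card

/-- Admissibility for the model (10;C1,C2;f): there is a decoder that recovers `x + y`
with zero error from the encoder outputs `φ1 x` and `φ2 (x, y)`. -/
def Admissible10 {k : ℕ} (φ1 : (Fin k → Fin 2) → ℕ)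
    (φ2 : (Fin k → Fin 2) × (Fin k → Fin 2) → ℕ) : Prop :=
  ∃ ψ : ℕ → ℕ → (Fin k → ℕ), ∀ x y : Fin k → Fin 2, ψ (φ1 x) (φ2 (x, y)) = vsum x y

/-- The rate of a k-shot code: `k / max(⌈log|Im φ1| / C1⌉, ⌈log|Im φ2| / C2⌉)`,
logarithms in base 2. -/
noncomputable def rate10 (C1 C2 : ℝ) {k : ℕ} (φ1 : (Fin k → Fin 2) → ℕ)
    (φ2 : (Fin k → Fin 2) × (Fin k → Fin 2) → ℕ) : ℝ :=
  (k : ℝ) /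
    ((max ⌈Real.logb 2 (imCard1 φ1) / C1⌉ ⌈Real.logb 2 (imCard2 φ2) / C2⌉ : ℤ) : ℝ)

namespace Cap10Aux

noncomputable def enc (k : ℕ) : (Fin k → Fin 2) → ℕ :=
  fun x => ((Fintype.equivFin (Fin k → Fin 2)) x : ℕ)

lemma enc_inj (k : ℕ) : Function.Injective (enc k) := fun a b h =>
  (Fintype.equivFin _).injective (Fin.val_injective h)

noncomputable def dec (k : ℕ) : ℕ → (Fin k → Fin 2) :=
  Function.invFun (enc k)

lemma dec_enc (k : ℕ) (x : Fin k → Fin 2) : dec k (enc k x) = x :=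
  Function.leftInverse_invFun (enc_inj k) x

lemma card_fun2 (k : ℕ) : Fintype.card (Fin k → Fin 2) = 2 ^ k := by
  simp [Fintype.card_fun]

lemma imCard1_enc (k : ℕ) : imCard1 (enc k) = 2 ^ k := by
  unfold imCard1
  rw [Finset.card_image_of_injective _ (enc_inj k), Finset.card_univ, card_fun2]

lemma imCard2_enc (k : ℕ) :
    imCard2 (fun p : (Fin k → Fin 2) × (Fin k → Fin 2) => enc k p.2) = 2 ^ k := by
  unfold imCard2
  have h : (Finset.univ.image (fun p : (Fin k → Fin 2) × (Fin k → Fin 2) => enc k p.2))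
      = Finset.univ.image (enc k) := by
    ext a
    simp only [Finset.mem_image, Finset.mem_univ, true_and, Prod.exists]
    constructor
    · rintro ⟨x, y, h⟩; exact ⟨y, h⟩
    · rintro ⟨y, h⟩; exact ⟨y, y, h⟩
  rw [h, Finset.card_image_of_injective _ (enc_inj k), Finset.card_univ, card_fun2]

lemma adm (k : ℕ) :
    Admissible10 (enc k) (fun p : (Fin k → Fin 2) × (Fin k → Fin 2) => enc k p.2) :=
  ⟨fun a b => vsum (dec k a) (dec k b), fun x y => by simp [dec_enc]⟩

lemma logb_two_pow (k : ℕ) : Real.logb 2 ((2 ^ k : ℕ) : ℝ) = k := by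
  push_cast
  rw [Real.logb_pow, Real.logb_self_eq_one (by norm_num), mul_one]

/-- Upper bound: any admissible code has rate at most C2. -/
lemma rate_le (C1 C2 : ℝ) (hC : C2 ≤ C1) (hC2 : 0 < C2) {k : ℕ} (hk : 0 < k)
    (φ1 : (Fin k → Fin 2) → ℕ) (φ2 : (Fin k → Fin 2) × (Fin k → Fin 2) → ℕ)
    (hadm : Admissible10 φ1 φ2) : rate10 C1 C2 φ1 φ2 ≤ C2 := by
  obtain ⟨ψ, hψ⟩ := hadm
  -- injectivity of y ↦ φ2 (0, y)
  set x0 : Fin k → Fin 2 := fun _ => 0 with hx0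
  have hginj : Function.Injective (fun y : Fin k → Fin 2 => φ2 (x0, y)) := by
    intro y y' h
    have h2 : vsum x0 y = vsum x0 y' := by
      rw [← hψ x0 y, ← hψ x0 y']
      exact congrArg (ψ (φ1 x0)) h
    funext i
    have := congrFun h2 i
    simp only [vsum] at this
    exact Fin.val_injective (by omega)
  have hcard : (2 : ℕ) ^ k ≤ imCard2 φ2 := by
    have hsub : (Finset.univ.image (fun y : Fin k → Fin 2 => φ2 (x0, y)))
        ⊆ Finset.univ.image φ2 := by
      intro a ha
      simp only [Finset.mem_image, Finset.mem_univ, true_and] at ha ⊢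
      obtain ⟨y, hy⟩ := ha
      exact ⟨(x0, y), hy⟩
    have := Finset.card_le_card hsub
    rwa [Finset.card_image_of_injective _ hginj, Finset.card_univ, card_fun2] at this
  -- logb bound
  have hlog : (k : ℝ) ≤ Real.logb 2 (imCard2 φ2) := by
    calc (k : ℝ) = Real.logb 2 ((2 ^ k : ℕ) : ℝ) := (logb_two_pow k).symm
    _ ≤ Real.logb 2 (imCard2 φ2) := by
        apply Real.logb_le_logb_of_le (by norm_num) (by positivity)
        exact_mod_cast hcard
  have hk' : (0 : ℝ) < k := by exact_mod_cast hk
  set M : ℤ := max ⌈Real.logb 2 (imCard1 φ1) / C1⌉ ⌈Real.logb 2 (imCard2 φ2) / C2⌉ with hM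
  have hMge : (k : ℝ) / C2 ≤ (M : ℝ) := by
    calc (k : ℝ) / C2 ≤ Real.logb 2 (imCard2 φ2) / C2 := by gcongr
    _ ≤ (⌈Real.logb 2 (imCard2 φ2) / C2⌉ : ℝ) := Int.le_ceil _
    _ ≤ (M : ℝ) := by exact_mod_cast Int.cast_le.mpr (le_max_right _ _)
  have hdiv : (0 : ℝ) < (k : ℝ) / C2 := by positivity
  have hMpos : (0 : ℝ) < (M : ℝ) := lt_of_lt_of_le hdiv hMge
  have : rate10 C1 C2 φ1 φ2 ≤ (k : ℝ) / ((k : ℝ) / C2) := by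
    unfold rate10
    rw [← hM]
    gcongr
  calc rate10 C1 C2 φ1 φ2 ≤ (k : ℝ) / ((k : ℝ) / C2) := this
  _ = C2 := by field_simp

/-- Rate of the explicit code. -/
lemma rate_eq (C1 C2 : ℝ) (hC : C2 ≤ C1) (hC2 : 0 < C2) {k : ℕ} (hk : 0 < k) :
    rate10 C1 C2 (enc k) (fun p : (Fin k → Fin 2) × (Fin k → Fin 2) => enc k p.2)
      = (k : ℝ) / (⌈(k : ℝ) / C2⌉ : ℝ) := by
  have hk' : (0 : ℝ) < k := by exact_mod_cast hk
  have hC1 : (0 : ℝ) < C1 := lt_of_lt_of_le hC2 hC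
  unfold rate10
  rw [imCard1_enc, imCard2_enc, logb_two_pow]
  have hle : (k : ℝ) / C1 ≤ (k : ℝ) / C2 := by gcongr
  rw [max_eq_right (Int.ceil_le_ceil hle)]

end Cap10Aux

theorem capacity_10 (C1 C2 : ℝ) (hC : C2 ≤ C1) (hC2 : 0 < C2) :
    sSup {r : ℝ | ∃ (k : ℕ), 0 < k ∧ ∃ (φ1 : (Fin k → Fin 2) → ℕ)
      (φ2 : (Fin k → Fin 2) × (Fin k → Fin 2) → ℕ),
      Admissible10 φ1 φ2 ∧ r = rate10 C1 C2 φ1 φ2} = C2 := by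
  set S := {r : ℝ | ∃ (k : ℕ), 0 < k ∧ ∃ (φ1 : (Fin k → Fin 2) → ℕ)
      (φ2 : (Fin k → Fin 2) × (Fin k → Fin 2) → ℕ),
      Admissible10 φ1 φ2 ∧ r = rate10 C1 C2 φ1 φ2} with hS
  have hub : ∀ r ∈ S, r ≤ C2 := by
    rintro r ⟨k, hk, φ1, φ2, hadm, rfl⟩
    exact Cap10Aux.rate_le C1 C2 hC hC2 hk φ1 φ2 hadm
  apply le_antisymm (Real.sSup_le hub hC2.le)
  apply le_of_forall_sub_le
  intro ε hε
  -- choose k large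
  set k : ℕ := max 1 ⌈C2 ^ 2 / ε⌉₊ with hkdef
  have hk1 : 0 < k := lt_of_lt_of_le one_pos (le_max_left _ _)
  have hk' : (0 : ℝ) < k := by exact_mod_cast hk1
  have hk2 : C2 ^ 2 / ε ≤ (k : ℝ) := by
    calc C2 ^ 2 / ε ≤ (⌈C2 ^ 2 / ε⌉₊ : ℝ) := Nat.le_ceil _
    _ ≤ (k : ℝ) := by exact_mod_cast Nat.le_max_right 1 _
  have hεk : C2 ^ 2 ≤ ε * k := by
    rw [div_le_iff₀ hε] at hk2
    linarith
  -- the element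
  have hmem : (k : ℝ) / (⌈(k : ℝ) / C2⌉ : ℝ) ∈ S := by
    refine ⟨k, hk1, Cap10Aux.enc k, _, Cap10Aux.adm k, ?_⟩
    exact (Cap10Aux.rate_eq C1 C2 hC hC2 hk1).symm
  have hbdd : BddAbove S := ⟨C2, hub⟩
  have hle : (k : ℝ) / (⌈(k : ℝ) / C2⌉ : ℝ) ≤ sSup S := le_csSup hbdd hmem
  refine le_trans ?_ hle
  -- show C2 - ε ≤ k / ⌈k/C2⌉
  set n : ℤ := ⌈(k : ℝ) / C2⌉ with hn
  have hn0 : (0 : ℝ) < (n : ℝ) := by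
    have : (0 : ℤ) < n := Int.ceil_pos.mpr (by positivity)
    exact_mod_cast this
  have hnk : (k : ℝ) ≤ (n : ℝ) * C2 := by
    have := Int.le_ceil ((k : ℝ) / C2)
    rw [div_le_iff₀ hC2] at this
    exact this
  have hnub : (n : ℝ) * C2 < (k : ℝ) + C2 := by
    have h1 : (n : ℝ) < (k : ℝ) / C2 + 1 := Int.ceil_lt_add_one _
    have := mul_lt_mul_of_pos_right h1 hC2
    rw [add_mul, one_mul, div_mul_cancel₀ _ hC2.ne'] at this
    exact this
  rw [sub_le_iff_le_add, div_add' _ _ _ hn0.ne', le_div_iff₀ hn0]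
  -- goal: C2 * n ≤ k + ε * n
  nlinarith [mul_pos hε hn0, mul_pos hC2 hn0]
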